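/- Let X = (X_t, φ_s^t) and Y = (Y_t, ψ_s^t) be persistence modules over a field K with fixed bases B_X = {x_1,…,x_N} and B_Y = {y_1,…,y_M}, and let α : X → Y be an ε-morphism. Then: (1) whenever Mat_{B_X}^{B_Y}(α)(j,i) ≠ 0 one has birth(y_j) ≤ birth(x_i)+ε < death(y_j) ≤ death(x_i)+ε; and (2) α is completely determined by its matrix: for every s ∈ ℝ and scalars λ_i ∈ K, α_s( Σ_{i : birth(x_i) ≤ s < death(x_i)} λ_i φ_{birth(x_i)}^s(x_i) ) = Σ_{i : birth(x_i) ≤ s < death(x_i)} λ_i Σ_{j : birth(y_j) ≤ birth(x_i)+ε < death(y_j)} Mat_{B_X}^{B_Y}(α)(j,i) ψ_{birth(y_j)}^{s+ε}(y_j). -/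

import Mathlib

open scoped BigOperators

universe u v

/-- A persistence module over a field `K`. -/
structure PersistenceModule (K : Type u) [Field K] where
  space : ℝ → Type v
  [instAdd : ∀ t, AddCommGroup (space t)]
  [instMod : ∀ t, Module K (space t)]
  trans : ∀ s t : ℝ, s ≤ t → (space s →ₗ[K] space t)
  trans_self : ∀ (t : ℝ) (h : t ≤ t), trans t t h = LinearMap.id
  trans_trans : ∀ (r s t : ℝ) (hrs : r ≤ s) (hst : s ≤ t) (x : space r),
      trans s t hst (trans r s hrs x) = trans r t (hrs.trans hst) x

attribute [instance] PersistenceModule.instAdd PersistenceModule.instMod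

namespace PersistenceModule

variable {K : Type u} [Field K]

/-- `x ∈ X_t` is born at `t` if it is not in the image of any earlier transition map. -/
def BornAt (X : PersistenceModule K) (t : ℝ) (x : X.space t) : Prop :=
  ∀ (s : ℝ) (h : s < t), x ∉ Set.range (X.trans s t h.le)

/-- The death time of an element `x ∈ X_t`. -/
noncomputable def death (X : PersistenceModule K) (t : ℝ) (x : X.space t) : ℝ :=
  sInf {s : ℝ | ∃ h : t < s, X.trans t s h.le x = 0}

/-- `x` is a basis of `X` realizing the intervals `[b i, d i)`. -/
def IsBasisFamily {ι : Type*} (X : PersistenceModule K) (b d : ι → ℝ)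
    (x : ∀ i, X.space (b i)) : Prop :=
  (∀ i, X.BornAt (b i) (x i)) ∧
  (∀ i, X.death (b i) (x i) = d i) ∧
  (∀ t : ℝ,
    LinearIndependent K
      (fun i : {i : ι // b i ≤ t ∧ t < d i} => X.trans (b i.1) t i.2.1 (x i.1)) ∧
    Submodule.span K (Set.range
      (fun i : {i : ι // b i ≤ t ∧ t < d i} => X.trans (b i.1) t i.2.1 (x i.1))) = ⊤)

open scoped Classical in
/-- The image of the basis element `x j` at height `h` (or `0` if not yet born). -/
noncomputable def pushTo {ι : Type*} (X : PersistenceModule K) (b : ι → ℝ)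
    (x : ∀ i, X.space (b i)) (h : ℝ) (j : ι) : X.space h :=
  if hb : b j ≤ h then X.trans (b j) h hb (x j) else 0

end PersistenceModule

/-- An `ε`-morphism of persistence modules. -/
structure EpsMorphism {K : Type u} [Field K] (X Y : PersistenceModule K) (ε : ℝ) where
  maps : ∀ r r' : ℝ, r + ε = r' → (X.space r →ₗ[K] Y.space r')
  comm : ∀ (s t s' t' : ℝ) (hs : s + ε = s') (ht : t + ε = t') (hst : s ≤ t)
      (x : X.space s),
    maps t t' ht (X.trans s t hst x) = Y.trans s' t' (by linarith) (maps s s' hs x)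

/-- A pair of `ε`-morphisms forming an `ε`-interleaving. -/
def IsInterleaving {K : Type u} [Field K] (X Y : PersistenceModule K) (ε : ℝ)
    (F : EpsMorphism X Y ε) (G : EpsMorphism Y X ε) : Prop :=
  (∀ (r r'' : ℝ) (h : r + ε + ε = r'') (hr : r ≤ r'') (x : X.space r),
      G.maps (r + ε) r'' (by linarith) (F.maps r (r + ε) rfl x) = X.trans r r'' hr x) ∧
  (∀ (r r'' : ℝ) (h : r + ε + ε = r'') (hr : r ≤ r'') (y : Y.space r),
      F.maps (r + ε) r'' (by linarith) (G.maps r (r + ε) rfl y) = Y.trans r r'' hr y)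

/-- `A` is the matrix of the `ε`-morphism `α` with respect to the bases `x` of `X`
(realizing `[bX i, dX i)`) and `y` of `Y` (realizing `[bY j, dY j)`). -/
def IsMatrixOf {K : Type u} [Field K] {X Y : PersistenceModule K} {ε : ℝ}
    {N M : ℕ} (α : EpsMorphism X Y ε)
    (bX dX : Fin N → ℝ) (x : ∀ i, X.space (bX i))
    (bY dY : Fin M → ℝ) (y : ∀ j, Y.space (bY j))
    (A : Matrix (Fin M) (Fin N) K) : Prop :=
  (∀ i, α.maps (bX i) (bX i + ε) rfl (x i)
      = ∑ j, A j i • Y.pushTo bY y (bX i + ε) j) ∧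
  (∀ (j : Fin M) (i : Fin N), ¬ (bY j ≤ bX i + ε ∧ bX i + ε < dY j) → A j i = 0)

/-- A basis transformation matrix. -/
def IsBasisTransformMatrix {K : Type u} [Field K] {N : ℕ} (b d : Fin N → ℝ)
    (A : Matrix (Fin N) (Fin N) K) : Prop :=
  (∀ i, A i i ≠ 0) ∧ ∀ j i, A j i ≠ 0 → b j ≤ b i ∧ d j ≤ d i

/-- The transformed family `A(B)`: `x_i^new = ∑ j A j i • φ(x_j)`. -/
noncomputable def transformBasis {K : Type u} [Field K] {N : ℕ} (X : PersistenceModule K)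
    (b : Fin N → ℝ) (x : ∀ i, X.space (b i)) (A : Matrix (Fin N) (Fin N) K)
    (i : Fin N) : X.space (b i) :=
  ∑ j, A j i • X.pushTo b x (b i) j

/-- The elementary matrix `e_{lk}^μ`: identity with extra entry `μ` in position `(k, l)`. -/
def eMat {K : Type u} [Field K] {N : ℕ} (l k : Fin N) (μ : K) : Matrix (Fin N) (Fin N) K :=
  1 + Matrix.single k l μ

open scoped Classical

/-- Auxiliary: an element is sent to zero by transitions strictly past its death time. -/
lemma trans_zero_of_death_lt {K : Type u} [Field K] {N : ℕ} (X : PersistenceModule K)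
    (b d : Fin N → ℝ) (x : ∀ i, X.space (b i)) (hbd : ∀ i, b i < d i)
    (hX : X.IsBasisFamily b d x) (i : Fin N) (u : ℝ) (hu : d i < u) (hbu : b i ≤ u) :
    X.trans (b i) u hbu (x i) = 0 := by
  obtain ⟨T, hT⟩ := Finite.exists_le d
  have hdT' : ∀ k, d k ≤ max T u := fun k => (hT k).trans (le_max_left _ _)
  haveI : IsEmpty {k : Fin N // b k ≤ max T u ∧ max T u < d k} :=
    ⟨fun k => absurd k.2.2 (not_lt.2 (hdT' k.1))⟩
  have hsub : ∀ z : X.space (max T u), z = 0 := by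
    intro z
    have hspan := (hX.2.2 (max T u)).2
    rw [Set.range_eq_empty, Submodule.span_empty] at hspan
    have hz : z ∈ (⊥ : Submodule K (X.space (max T u))) := hspan ▸ Submodule.mem_top
    simpa using hz
  have hbT' : b i < max T u := (hbd i).trans_le (hdT' i)
  have hmem : max T u ∈ {s : ℝ | ∃ h : b i < s, X.trans (b i) s h.le (x i) = 0} :=
    ⟨hbT', hsub _⟩
  have hne : Set.Nonempty {s : ℝ | ∃ h : b i < s, X.trans (b i) s h.le (x i) = 0} :=
    ⟨max T u, hmem⟩
  have hlt : sInf {s : ℝ | ∃ h : b i < s, X.trans (b i) s h.le (x i) = 0} < u := by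
    have hd := hX.2.1 i
    unfold PersistenceModule.death at hd
    rw [hd]; exact hu
  obtain ⟨s, hs, hsu⟩ := exists_lt_of_csInf_lt hne hlt
  obtain ⟨hbs, h0⟩ := hs
  have htt := X.trans_trans (b i) s u hbs.le hsu.le (x i)
  rw [h0, map_zero] at htt
  exact htt.symm

/-- If `A` is the matrix of an `ε`-morphism `α : X → Y` with respect to bases
`B_X`, `B_Y`, then (1) nonzero entries force
`birth(y_j) ≤ birth(x_i)+ε < death(y_j) ≤ death(x_i)+ε`, and (2) the matrix completely
determines `α` on every `X_s`. -/
theorem statement0 {K : Type u} [Field K] {N M : ℕ}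
    (X Y : PersistenceModule K) (ε : ℝ) (hε : 0 ≤ ε)
    (bX dX : Fin N → ℝ) (x : ∀ i, X.space (bX i))
    (bY dY : Fin M → ℝ) (y : ∀ j, Y.space (bY j))
    (hbdX : ∀ i, bX i < dX i) (hbdY : ∀ j, bY j < dY j)
    (hdistX : Function.Injective fun i => (bX i, dX i))
    (hdistY : Function.Injective fun j => (bY j, dY j))
    (hX : X.IsBasisFamily bX dX x) (hY : Y.IsBasisFamily bY dY y)
    (α : EpsMorphism X Y ε)
    (A : Matrix (Fin M) (Fin N) K)
    (hA : IsMatrixOf α bX dX x bY dY y A) :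
    (∀ (j : Fin M) (i : Fin N), A j i ≠ 0 →
        bY j ≤ bX i + ε ∧ bX i + ε < dY j ∧ dY j ≤ dX i + ε) ∧
    (∀ (s : ℝ) (lam : Fin N → K),
      α.maps s (s + ε) rfl
          (∑ i ∈ Finset.univ.filter (fun i => bX i ≤ s ∧ s < dX i),
            lam i • X.pushTo bX x s i)
        = ∑ i ∈ Finset.univ.filter (fun i => bX i ≤ s ∧ s < dX i),
            lam i •
              ∑ j ∈ Finset.univ.filter (fun j => bY j ≤ bX i + ε ∧ bX i + ε < dY j),
                A j i • Y.pushTo bY y (s + ε) j) := by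
  have key : ∀ (s : ℝ) (i : Fin N) (hbs : bX i ≤ s),
      α.maps s (s + ε) rfl (X.trans (bX i) s hbs (x i))
        = ∑ j, A j i • Y.pushTo bY y (s + ε) j := by
    intro s i hbs
    rw [α.comm (bX i) s (bX i + ε) (s + ε) rfl rfl hbs (x i), hA.1 i, map_sum]
    refine Finset.sum_congr rfl fun j _ => ?_
    rw [map_smul]
    by_cases hj : bY j ≤ bX i + ε
    · unfold PersistenceModule.pushTo
      rw [dif_pos hj, dif_pos (hj.trans (by linarith)), Y.trans_trans]
    · have hA0 : A j i = 0 := hA.2 j i (fun h => hj h.1)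
      simp [hA0]
  have dead : ∀ (j : Fin M) (u : ℝ), dY j < u → Y.pushTo bY y u j = 0 := by
    intro j u hu
    unfold PersistenceModule.pushTo
    rw [dif_pos ((hbdY j).le.trans hu.le)]
    exact trans_zero_of_death_lt Y bY dY y hbdY hY j u hu _
  constructor
  · intro j i hAji
    have h1 : bY j ≤ bX i + ε ∧ bX i + ε < dY j := by
      by_contra h; exact hAji (hA.2 j i h)
    refine ⟨h1.1, h1.2, ?_⟩
    by_contra hd
    push_neg at hd
    obtain ⟨t, ht, htne⟩ := (Set.Ioo_infinite hd).exists_notMem_finset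
      (Finset.image dY Finset.univ)
    have htne' : ∀ j', dY j' ≠ t := fun j' h =>
      htne (by rw [← h]; exact Finset.mem_image_of_mem dY (Finset.mem_univ j'))
    have hbt' : bX i ≤ t - ε := by linarith [hbdX i, ht.1]
    have hzero : X.trans (bX i) (t - ε) hbt' (x i) = 0 :=
      trans_zero_of_death_lt X bX dX x hbdX hX i (t - ε) (by linarith [ht.1]) hbt'
    have h0 : ∑ j', A j' i • Y.pushTo bY y (t - ε + ε) j' = 0 := by
      rw [← key (t - ε) i hbt', hzero, map_zero]
    set u := t - ε + ε with hu
    have hut : u = t := by rw [hu]; ring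
    have hsum0 : ∑ j'' : {j' : Fin M // bY j' ≤ u ∧ u < dY j'},
        A j''.1 i • Y.trans (bY j''.1) u j''.2.1 (y j''.1) = 0 := by
      have h2 : ∑ j'' : {j' : Fin M // bY j' ≤ u ∧ u < dY j'},
          A j''.1 i • Y.trans (bY j''.1) u j''.2.1 (y j''.1)
          = ∑ j' ∈ Finset.univ.filter (fun j' => bY j' ≤ u ∧ u < dY j'),
              A j' i • Y.pushTo bY y u j' := by
        rw [Finset.sum_subtype (p := fun j' => bY j' ≤ u ∧ u < dY j')
              (Finset.univ.filter fun j' => bY j' ≤ u ∧ u < dY j')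
              (fun j' => by simp) (fun j' => A j' i • Y.pushTo bY y u j')]
        refine Finset.sum_congr rfl fun j'' _ => ?_
        rw [show Y.pushTo bY y u j''.1 = Y.trans (bY j''.1) u j''.2.1 (y j''.1) from
          dif_pos j''.2.1]
      rw [h2, Finset.sum_filter_of_ne, h0]
      intro j' _ hne2
      by_contra hc
      refine hne2 ?_
      push_neg at hc
      by_cases hb : bY j' ≤ u
      · have hdu : dY j' < u := lt_of_le_of_ne (hc hb) (fun h => htne' j' (h.trans hut))
        rw [dead j' u hdu]; simp
      · rw [show Y.pushTo bY y u j' = 0 from dif_neg hb]; simp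
    have hli := (hY.2.2 u).1
    have hz := Fintype.linearIndependent_iff.mp hli (fun j'' => A j''.1 i) hsum0
      ⟨j, ⟨by rw [hut]; linarith [h1.1, ht.1, hbdX i], by rw [hut]; exact ht.2⟩⟩
    exact hAji hz
  · intro s lam
    rw [map_sum]
    refine Finset.sum_congr rfl fun i hi => ?_
    simp only [Finset.mem_filter] at hi
    rw [map_smul]
    congr 1
    have hp : X.pushTo bX x s i = X.trans (bX i) s hi.2.1 (x i) := dif_pos hi.2.1
    rw [hp, key s i hi.2.1]
    refine (Finset.sum_filter_of_ne fun j _ hne => ?_).symm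
    by_contra hc
    exact hne (by rw [hA.2 j i hc]; simp)
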